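/- Let L be a lattice with ordered basis b_1,…,b_N and let L̂ ⊆ L be a D-dimensional sublattice. Let K be the smallest index such that L̂ is contained in the lattice generated by b_1,…,b_K. Then there exists a basis c_1,…,c_D of L̂ such that the last Gram–Schmidt vector satisfies ‖c_D*‖ ≥ ‖b_K*‖. -/

import Mathlib

/-- Gram–Schmidt orthogonalization for families indexed by `Fin M`. -/
noncomputable def gramSchmidtFin {N M : ℕ} (b : Fin M → EuclideanSpace ℝ (Fin N)) :
    Fin M → EuclideanSpace ℝ (Fin N) :=
  @InnerProductSpace.gramSchmidt ℝ _ _ _ _ (Fin M) _ _ ((Fin.Lt.isWellOrder M).toIsWellFounded) b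

private lemma gsFin_key {N M : ℕ} (b : Fin M → EuclideanSpace ℝ (Fin N)) (n : Fin M) :
    b n - gramSchmidtFin b n ∈ Submodule.span ℝ (b '' Set.Iio n) ∧
    ∀ u ∈ Submodule.span ℝ (b '' Set.Iio n), (inner ℝ (gramSchmidtFin b n) u : ℝ) = 0 := by
  unfold gramSchmidtFin
  have hspan := @InnerProductSpace.span_gramSchmidt_Iio ℝ _ _ _ _ (Fin M) _ _
    ((Fin.Lt.isWellOrder M).toIsWellFounded) b n
  constructor
  · have hdef := @InnerProductSpace.gramSchmidt_def' ℝ _ _ _ _ (Fin M) _ _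
      ((Fin.Lt.isWellOrder M).toIsWellFounded) b n
    have h := sub_eq_iff_eq_add'.mpr hdef
    rw [h]
    apply Submodule.sum_mem
    intro i hi
    have h1 : @InnerProductSpace.gramSchmidt ℝ _ _ _ _ (Fin M) _ _ ((Fin.Lt.isWellOrder M).toIsWellFounded) b i
        ∈ Submodule.span ℝ (b '' Set.Iio n) := by
      rw [← hspan]
      exact Submodule.subset_span ⟨i, Finset.mem_Iio.mp hi, rfl⟩
    exact (Submodule.span_singleton_le_iff_mem _ _).mpr h1 (SetLike.coe_mem _)
  · intro u hu
    rw [← hspan] at hu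
    have hle : Submodule.span ℝ
        ((@InnerProductSpace.gramSchmidt ℝ _ _ _ _ (Fin M) _ _ ((Fin.Lt.isWellOrder M).toIsWellFounded) b)
          '' Set.Iio n) ≤
        (ℝ ∙ (@InnerProductSpace.gramSchmidt ℝ _ _ _ _ (Fin M) _ _ ((Fin.Lt.isWellOrder M).toIsWellFounded) b n))ᗮ := by
      rw [Submodule.span_le]
      rintro _ ⟨i, hi, rfl⟩
      rw [SetLike.mem_coe, Submodule.mem_orthogonal_singleton_iff_inner_right]
      exact @InnerProductSpace.gramSchmidt_orthogonal ℝ _ _ _ _ (Fin M) _ _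
        ((Fin.Lt.isWellOrder M).toIsWellFounded) b n i (ne_of_gt hi)
    exact Submodule.mem_orthogonal_singleton_iff_inner_right.mp (hle hu)

/-- Dual of sublattice: if `K` is the smallest index such that the `D`-dimensional
sublattice `L̂` is contained in the lattice generated by `b 1, …, b K`, then `L̂` has a
basis `c` whose last Gram–Schmidt vector satisfies `‖c D*‖ ≥ ‖b K*‖`. -/
theorem dual_of_sublattice (N D K : ℕ) (hD : 1 ≤ D) (hK : 1 ≤ K) (hKN : K ≤ N)
    (b : Fin N → EuclideanSpace ℝ (Fin N)) (hb : LinearIndependent ℝ b)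
    (a : Fin D → EuclideanSpace ℝ (Fin N)) (ha : LinearIndependent ℝ a)
    (Lhat : Submodule ℤ (EuclideanSpace ℝ (Fin N)))
    (hLhat : Lhat = Submodule.span ℤ (Set.range a))
    (hsub : Lhat ≤ Submodule.span ℤ (Set.range b))
    (hcontained : Lhat ≤ Submodule.span ℤ (b '' {i : Fin N | i.val < K}))
    (hKmin : ∀ K' : ℕ, K' < K → ¬ Lhat ≤ Submodule.span ℤ (b '' {i : Fin N | i.val < K'})) :
    ∃ c : Fin D → EuclideanSpace ℝ (Fin N),
      Submodule.span ℤ (Set.range c) = Lhat ∧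
      ‖gramSchmidtFin b ⟨K - 1, by omega⟩‖ ≤ ‖gramSchmidtFin c ⟨D - 1, by omega⟩‖ := by
  classical
  have hcast : Function.Injective fun r : ℤ => r • (1 : ℝ) :=
    fun x y h => by simpa using h
  have hbZ : LinearIndependent ℤ b := hb.restrict_scalars hcast
  have haZ : LinearIndependent ℤ a := by
    rw [hLhat] at *
    exact ha.restrict_scalars hcast
  subst hLhat
  set Lh := Submodule.span ℤ (Set.range a) with hLh
  set M := Submodule.span ℤ (Set.range b) with hM
  let Bz : Module.Basis (Fin N) ℤ M := Module.Basis.span hbZ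
  let kK : Fin N := ⟨K - 1, by omega⟩
  let dD : Fin D := ⟨D - 1, by omega⟩
  let f : Lh →ₗ[ℤ] ℤ := (Bz.coord kK).comp (Submodule.inclusion hsub)
  have hf_apply : ∀ x : Lh, f x = Bz.repr (Submodule.inclusion hsub x) kK := fun _ => rfl
  -- membership key
  have hmap : ∀ s : Set (Fin N),
      Submodule.map M.subtype (Submodule.span ℤ (⇑Bz '' s)) = Submodule.span ℤ (b '' s) := by
    intro s
    rw [Submodule.map_span, ← Set.image_comp]
    congr 1
    apply congrArg (· '' s)
    funext i
    exact congrArg Subtype.val (Module.Basis.span_apply hbZ i)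
  have key : ∀ (z : M) (s : Set (Fin N)),
      ((z : EuclideanSpace ℝ (Fin N)) ∈ Submodule.span ℤ (b '' s) ↔ ∀ j, Bz.repr z j ≠ 0 → j ∈ s) := by
    intro z s
    rw [← hmap s]
    constructor
    · intro h
      obtain ⟨y, hy, hyz⟩ := h
      have hyz' : y = z := Subtype.ext hyz
      subst hyz'
      intro j hj
      exact Bz.mem_span_image.mp hy (Finset.mem_coe.mpr (Finsupp.mem_support_iff.mpr hj))
    · intro h
      exact Submodule.mem_map_of_mem
        (Bz.mem_span_image.mpr fun j hj => h j (Finsupp.mem_support_iff.mp (Finset.mem_coe.mp hj)))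
  -- kernel elements lie in the span of the first K-1 vectors
  have hker_mem : ∀ x : Lh, f x = 0 →
      (x : EuclideanSpace ℝ (Fin N)) ∈ Submodule.span ℤ (b '' {i : Fin N | i.val < K - 1}) := by
    intro x hfx
    have hx1 : ((Submodule.inclusion hsub x : M) : EuclideanSpace ℝ (Fin N)) ∈ Submodule.span ℤ (b '' {i : Fin N | i.val < K}) := by
      rw [Submodule.coe_inclusion]
      exact hcontained x.2
    have h1 := (key _ _).mp hx1
    have := (key (Submodule.inclusion hsub x) {i : Fin N | i.val < K - 1}).mpr ?_
    · rwa [Submodule.coe_inclusion] at this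
    · intro j hj
      have hjK : (j : ℕ) < K := h1 j hj
      by_contra hcon
      have : j = kK := Fin.ext (by simp only [Set.mem_setOf_eq] at hcon ⊢; show (j : ℕ) = K - 1; omega)
      rw [this] at hj
      exact hj (by rw [← hf_apply x, hfx])
  -- nontriviality of f's image
  have hv_exists : ∃ x : Lh, f x ≠ 0 := by
    by_contra hcon
    push_neg at hcon
    apply hKmin (K - 1) (by omega)
    intro y hy
    exact hker_mem ⟨y, hy⟩ (hcon _)
  let I : Submodule ℤ ℤ := LinearMap.range f
  let v : ℤ := Submodule.IsPrincipal.generator I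
  have hdvd : ∀ x : Lh, v ∣ f x := fun x =>
    (Submodule.IsPrincipal.mem_iff_generator_dvd I).mp (LinearMap.mem_range_self f x)
  obtain ⟨e, he⟩ : ∃ e : Lh, f e = v := Submodule.IsPrincipal.generator_mem I
  have hv : v ≠ 0 := by
    intro h0
    obtain ⟨x, hx⟩ := hv_exists
    obtain ⟨m, hm⟩ := hdvd x
    rw [h0, zero_mul] at hm
    exact hx hm
  -- basis of the kernel
  let kerf := LinearMap.ker f
  let aB : Module.Basis (Fin D) ℤ Lh := Module.Basis.span haZ
  obtain ⟨n, cb⟩ := Submodule.basisOfPid aB kerf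
  haveI : Module.Finite ℤ ↥kerf := Module.Finite.of_basis cb
  haveI : Module.Free ℤ ↥kerf := Module.Free.of_basis cb
  -- the splitting map
  let g : (↥kerf × ℤ) →ₗ[ℤ] Lh := LinearMap.coprod kerf.subtype (LinearMap.toSpanSingleton ℤ Lh e)
  have hg_apply : ∀ p : ↥kerf × ℤ, g p = (p.1 : Lh) + p.2 • e := fun _ => rfl
  have hg_inj : Function.Injective g := by
    rw [← LinearMap.ker_eq_bot]
    rw [eq_bot_iff]
    rintro ⟨k, m⟩ hkm
    rw [LinearMap.mem_ker, hg_apply] at hkm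
    have h1 := congrArg f hkm
    rw [map_add, map_zero, map_smul, he, smul_eq_mul, LinearMap.mem_ker.mp k.2, zero_add] at h1
    have hm0 : m = 0 := by
      rcases mul_eq_zero.mp h1 with h | h
      · exact h
      · exact absurd h hv
    subst hm0
    rw [zero_smul, add_zero] at hkm
    have : k = 0 := Subtype.ext hkm
    simp [this, Prod.ext_iff]
  have hg_surj : Function.Surjective g := by
    intro x
    obtain ⟨m, hm⟩ := hdvd x
    have hkx : x - m • e ∈ kerf := by
      rw [LinearMap.mem_ker, map_sub, map_smul, he, smul_eq_mul, hm, mul_comm, sub_self]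
    exact ⟨(⟨x - m • e, hkx⟩, m), by rw [hg_apply]; simp⟩
  have hn : n = D - 1 := by
    have h1 : Module.finrank ℤ (↥kerf × ℤ) = Module.finrank ℤ Lh :=
      (LinearEquiv.ofBijective g ⟨hg_inj, hg_surj⟩).finrank_eq
    rw [Module.finrank_prod, Module.finrank_self, Module.finrank_eq_card_basis cb,
      Module.finrank_eq_card_basis aB, Fintype.card_fin, Fintype.card_fin] at h1
    omega
  -- the new basis
  let c : Fin D → EuclideanSpace ℝ (Fin N) := fun i => if h : (i : ℕ) < D - 1 then ((cb ⟨i, by omega⟩ : Lh) : EuclideanSpace ℝ (Fin N)) else (e : EuclideanSpace ℝ (Fin N))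
  have hcdd : c dD = (e : EuclideanSpace ℝ (Fin N)) := by simp [c, dD]
  have hc_lt : ∀ (i : Fin D) (h : (i : ℕ) < D - 1), c i = ((cb ⟨i, by omega⟩ : Lh) : EuclideanSpace ℝ (Fin N)) :=
    fun i h => by simp [c, h]
  refine ⟨c, ?_, ?_⟩
  · -- span equality
    apply le_antisymm
    · rw [Submodule.span_le]
      rintro _ ⟨i, rfl⟩
      by_cases h : (i : ℕ) < D - 1
      · rw [hc_lt i h]; exact SetLike.coe_mem _
      · simp only [c, dif_neg h]; exact SetLike.coe_mem _
    · intro y hy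
      set x : Lh := ⟨y, hy⟩ with hx
      obtain ⟨m, hm⟩ := hdvd x
      have hkx : x - m • e ∈ kerf := by
        rw [LinearMap.mem_ker, map_sub, map_smul, he, smul_eq_mul, hm, mul_comm, sub_self]
      have hcoe : ∀ k : ↥kerf, ((k : Lh) : EuclideanSpace ℝ (Fin N)) ∈ Submodule.span ℤ (Set.range c) := by
        intro k
        let π : ↥kerf →ₗ[ℤ] EuclideanSpace ℝ (Fin N) := Lh.subtype.comp kerf.subtype
        have hk : k ∈ Submodule.span ℤ (Set.range ⇑cb) := by rw [cb.span_eq]; trivial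
        have h1 : π k ∈ Submodule.map π (Submodule.span ℤ (Set.range ⇑cb)) :=
          Submodule.mem_map_of_mem hk
        rw [Submodule.map_span, ← Set.range_comp] at h1
        refine Submodule.span_mono ?_ h1
        rintro _ ⟨j, rfl⟩
        refine ⟨⟨(j : ℕ), by omega⟩, ?_⟩
        have hj : ((⟨(j : ℕ), by omega⟩ : Fin D) : ℕ) < D - 1 := by
          simp only []
          omega
        rw [hc_lt _ hj]
        exact congrArg (fun t : ↥kerf => ((t : Lh) : EuclideanSpace ℝ (Fin N)))
          (congrArg cb (Fin.ext rfl))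
      have h1 := hcoe ⟨x - m • e, hkx⟩
      have h2 : (e : EuclideanSpace ℝ (Fin N)) ∈ Submodule.span ℤ (Set.range c) := by
        rw [← hcdd]; exact Submodule.subset_span (Set.mem_range_self dD)
      have h3 : y = ((x - m • e : Lh) : EuclideanSpace ℝ (Fin N)) + m • (e : EuclideanSpace ℝ (Fin N)) := by
        rw [Submodule.coe_sub, Submodule.coe_smul]
        simp [hx]
      rw [h3]
      exact Submodule.add_mem _ h1 (Submodule.smul_mem _ m h2)
  · -- the norm estimate
    set W : Submodule ℝ (EuclideanSpace ℝ (Fin N)) := Submodule.span ℝ (b '' Set.Iio kK) with hW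
    have hWmem : ∀ x : EuclideanSpace ℝ (Fin N), x ∈ Submodule.span ℤ (b '' {i : Fin N | i.val < K - 1}) → x ∈ W := by
      intro x hx
      have hsets : {i : Fin N | i.val < K - 1} = Set.Iio kK := by
        ext j
        simp [Fin.lt_def, kK]
      rw [hsets] at hx
      exact Submodule.span_le_restrictScalars ℤ ℝ _ hx
    -- decomposition of e
    have het : ((e : EuclideanSpace ℝ (Fin N)) - (v : ℝ) • b kK) ∈ W := by
      set z : M := Submodule.inclusion hsub e - v • Bz kK with hzdef
      have hz : (z : EuclideanSpace ℝ (Fin N)) = (e : EuclideanSpace ℝ (Fin N)) - (v : ℝ) • b kK := by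
        rw [hzdef, Submodule.coe_sub, Submodule.coe_smul, Submodule.coe_inclusion,
          Module.Basis.span_apply, Int.cast_smul_eq_zsmul]
      have he1 : ((Submodule.inclusion hsub e : M) : EuclideanSpace ℝ (Fin N)) ∈ Submodule.span ℤ (b '' {i : Fin N | i.val < K}) := by
        rw [Submodule.coe_inclusion]
        exact hcontained e.2
      have h1 := (key _ _).mp he1
      have h2 : ∀ j, Bz.repr z j ≠ 0 → j ∈ {i : Fin N | i.val < K - 1} := by
        intro j hj
        rw [hzdef, map_sub, map_smul, Finsupp.sub_apply, Finsupp.smul_apply,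
          Module.Basis.repr_self] at hj
        by_cases hcase : j = kK
        · exfalso
          apply hj
          rw [hcase, Finsupp.single_apply, if_pos rfl, smul_eq_mul, mul_one, ← hf_apply e, he,
            sub_self]
        · rw [Finsupp.single_apply, if_neg (fun hh => hcase hh.symm), smul_eq_mul, mul_zero,
            sub_zero] at hj
          have hjK : (j : ℕ) < K := h1 j hj
          have : j ≠ kK := hcase
          simp only [Set.mem_setOf_eq]
          have : (j : ℕ) ≠ K - 1 := fun hh => hcase (Fin.ext hh)
          omega
      have h3 := (key z _).mpr h2
      rw [hz] at h3
      exact hWmem _ h3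
    -- c i for i < D-1 lies in W
    have hcW : ∀ i : Fin D, i < dD → c i ∈ W := by
      intro i hi
      have h : (i : ℕ) < D - 1 := by
        have := Fin.lt_def.mp hi
        simpa [dD] using this
      rw [hc_lt i h]
      exact hWmem _ (hker_mem _ (LinearMap.mem_ker.mp (SetLike.coe_mem (cb ⟨i, by omega⟩))))
    obtain ⟨hpb, hob⟩ := gsFin_key b kK
    obtain ⟨hqc, -⟩ := gsFin_key c dD
    set gsb := gramSchmidtFin b kK with hgsb
    set gsc := gramSchmidtFin c dD with hgsc
    have hWc : Submodule.span ℝ (c '' Set.Iio dD) ≤ W := by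
      rw [Submodule.span_le]
      rintro _ ⟨i, hi, rfl⟩
      exact hcW i hi
    have hqc' : c dD - gsc ∈ W := hWc hqc
    set u : EuclideanSpace ℝ (Fin N) := (v : ℝ) • (b kK - gsb) + ((e : EuclideanSpace ℝ (Fin N)) - (v : ℝ) • b kK) - (c dD - gsc) with hu
    have huW : u ∈ W := by
      exact Submodule.sub_mem _ (Submodule.add_mem _ (Submodule.smul_mem _ _ hpb) het) hqc'
    have hdecomp : gsc = (v : ℝ) • gsb + u := by
      rw [hu, hcdd]
      module
    have hinner : (inner ℝ gsb u : ℝ) = 0 := hob u huW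
    have h5 : ‖gsc‖ ^ 2 = ‖(v : ℝ) • gsb‖ ^ 2 + ‖u‖ ^ 2 := by
      rw [hdecomp, norm_add_sq_real, real_inner_smul_left, hinner]
      ring
    have h6 : ‖(v : ℝ) • gsb‖ = |(v : ℝ)| * ‖gsb‖ := by
      rw [norm_smul, Real.norm_eq_abs]
    have h7 : (1 : ℝ) ≤ |(v : ℝ)| := by
      rw [← Int.cast_abs]
      exact_mod_cast Int.one_le_abs hv
    have h9 : ‖(v : ℝ) • gsb‖ ^ 2 ≤ ‖gsc‖ ^ 2 := by
      rw [h5]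
      have := sq_nonneg ‖u‖
      linarith
    have h10 : ‖(v : ℝ) • gsb‖ ≤ ‖gsc‖ := by
      have hs := Real.sqrt_le_sqrt h9
      rwa [Real.sqrt_sq (norm_nonneg _), Real.sqrt_sq (norm_nonneg _)] at hs
    have h11 : ‖gsb‖ ≤ ‖(v : ℝ) • gsb‖ := by
      rw [h6]
      have := mul_le_mul_of_nonneg_right h7 (norm_nonneg gsb)
      rwa [one_mul] at this
    exact le_trans h11 h10
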